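/- Let k be an algebraically closed field of characteristic zero, complete with respect to a non-Archimedean multiplicative norm ‖·‖. Let f, g ∈ k[X] be coprime polynomials with d = max(natDegree f, natDegree g) ≥ 1, and assume ‖(q : k)‖ = 1 for every prime q ≤ d. Let a ∈ k and r ≥ 0. If for every w ∈ k there exists x with ‖x − a‖ ≤ r and f.eval x = w · g.eval x, and moreover there exists x with ‖x − a‖ ≤ r and g.eval x = 0 (so φ = f/g maps D(a,r) onto P¹(k)), then there exists c ∈ k with ‖c − a‖ ≤ r and (derivative f · g − f · derivative g).eval c = 0. -/

import Mathlib

open Polynomial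

namespace Stmt9Aux

open Finset

variable {k : Type*} [NormedField k]

/-! ### Ultrametric helpers -/

section Ultra

variable [IsUltrametricDist k]

lemma norm_add_le_max' (a b : k) : ‖a + b‖ ≤ max ‖a‖ ‖b‖ :=
  IsUltrametricDist.norm_add_le_max a b

lemma norm_sub_le_max' (a b : k) : ‖a - b‖ ≤ max ‖a‖ ‖b‖ := by
  rw [sub_eq_add_neg]
  simpa using norm_add_le_max' a (-b)

lemma norm_add_eq_left {a b : k} (h : ‖b‖ < ‖a‖) : ‖a + b‖ = ‖a‖ := by
  apply le_antisymm
  · exact le_trans (norm_add_le_max' a b) (by rw [max_eq_left h.le])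
  · have h2 := norm_add_le_max' (a + b) (-b)
    rw [norm_neg, add_neg_cancel_right] at h2
    rcases le_max_iff.mp h2 with h3 | h3
    · exact h3
    · exact absurd h3 (not_le.mpr h)

lemma norm_sub_eq_left {a b : k} (h : ‖b‖ < ‖a‖) : ‖a - b‖ = ‖a‖ := by
  rw [sub_eq_add_neg]
  exact norm_add_eq_left (by rwa [norm_neg])

lemma norm_sum_le' {ι : Type*} (s : Finset ι) (f : ι → k) {B : ℝ} (hB : 0 ≤ B)
    (h : ∀ i ∈ s, ‖f i‖ ≤ B) : ‖∑ i ∈ s, f i‖ ≤ B := by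
  induction s using Finset.cons_induction_on with
  | empty => simpa using hB
  | cons _ _ ha ih =>
    rename_i a t
    rw [Finset.sum_cons]
    refine le_trans (norm_add_le_max' _ _) (max_le (h a (Finset.mem_cons_self _ _)) ?_)
    exact ih (fun i hi => h i (Finset.mem_cons_of_mem hi))

lemma norm_sum_lt' {ι : Type*} (s : Finset ι) (f : ι → k) {B : ℝ} (hB : 0 < B)
    (h : ∀ i ∈ s, ‖f i‖ < B) : ‖∑ i ∈ s, f i‖ < B := by
  induction s using Finset.cons_induction_on with
  | empty => simpa using hB
  | cons _ _ ha ih =>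
    rename_i a t
    rw [Finset.sum_cons]
    refine lt_of_le_of_lt (norm_add_le_max' _ _) (max_lt (h a (Finset.mem_cons_self _ _)) ?_)
    exact ih (fun i hi => h i (Finset.mem_cons_of_mem hi))

lemma norm_cast_sub_le_one (a b : ℕ) : ‖(a : k) - (b : k)‖ ≤ 1 :=
  le_trans (norm_sub_le_max' _ _)
    (max_le (IsUltrametricDist.norm_natCast_le_one k a)
      (IsUltrametricDist.norm_natCast_le_one k b))

end Ultra

/-! ### Norms of small naturals -/

lemma norm_nat (d : ℕ) (hres : ∀ q : ℕ, q.Prime → q ≤ d → ‖(q : k)‖ = 1) :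
    ∀ m : ℕ, 1 ≤ m → m ≤ d → ‖(m : k)‖ = 1 := by
  intro m
  induction m using Nat.strong_induction_on with
  | _ m ih =>
    intro h1 hmd
    rcases eq_or_ne m 1 with rfl | hm1
    · simp
    by_cases hp : m.Prime
    · exact hres m hp hmd
    · obtain ⟨p, hpp, hdvd⟩ := Nat.exists_prime_and_dvd hm1
      obtain ⟨t, rfl⟩ := hdvd
      have hp2 : 2 ≤ p := hpp.two_le
      have ht1 : 1 ≤ t := by
        rcases Nat.eq_zero_or_pos t with rfl | h
        · simp at h1
        · exact h
      have htlt : t < p * t := by nlinarith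
      have hpt : ‖(p : k)‖ = 1 := hres p hpp (le_trans (Nat.le_mul_of_pos_right p ht1) hmd)
      have htt : ‖(t : k)‖ = 1 := ih t htlt ht1 (le_trans (le_of_lt htlt) hmd)
      rw [Nat.cast_mul, norm_mul, hpt, htt, one_mul]

lemma norm_cast_sub_eq_one [IsUltrametricDist k] (d : ℕ)
    (hnorm : ∀ m : ℕ, 1 ≤ m → m ≤ d → ‖(m : k)‖ = 1)
    {a b : ℕ} (ha : a ≤ d) (hb : b ≤ d) (hne : a ≠ b) : ‖(a : k) - (b : k)‖ = 1 := by
  rcases lt_or_gt_of_ne hne with h | h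
  · rw [norm_sub_rev, ← Nat.cast_sub h.le]
    exact hnorm (b - a) (by omega) (by omega)
  · rw [← Nat.cast_sub h.le]
    exact hnorm (a - b) (by omega) (by omega)

/-! ### Sizes and Gauss norms -/

noncomputable def sz (r : ℝ) (P : k[X]) (i : ℕ) : ℝ := ‖P.coeff i‖ * r ^ i

noncomputable def Nm (d : ℕ) (r : ℝ) (P : k[X]) : ℝ :=
  (Finset.range (d + 1)).sup' (by simp) (sz r P)

lemma sz_nonneg {r : ℝ} (hr : 0 ≤ r) (P : k[X]) (i : ℕ) : 0 ≤ sz r P i :=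
  mul_nonneg (norm_nonneg _) (pow_nonneg hr i)

lemma sz_le_Nm (d : ℕ) (r : ℝ) (P : k[X]) {i : ℕ} (hi : i ≤ d) : sz r P i ≤ Nm d r P :=
  Finset.le_sup' _ (Finset.mem_range.mpr (by omega))

lemma Nm_nonneg (d : ℕ) {r : ℝ} (hr : 0 ≤ r) (P : k[X]) : 0 ≤ Nm d r P :=
  le_trans (sz_nonneg hr P 0) (sz_le_Nm d r P (Nat.zero_le d))

lemma sz_eq_zero_of_gt {d : ℕ} {r : ℝ} {P : k[X]} (hdP : P.natDegree ≤ d) {i : ℕ}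
    (hi : d < i) : sz r P i = 0 := by
  rw [sz, Polynomial.coeff_eq_zero_of_natDegree_lt (lt_of_le_of_lt hdP hi), norm_zero, zero_mul]

lemma sz_le_Nm' (d : ℕ) {r : ℝ} (hr : 0 ≤ r) {P : k[X]} (hdP : P.natDegree ≤ d) (i : ℕ) :
    sz r P i ≤ Nm d r P := by
  rcases le_or_gt i d with h | h
  · exact sz_le_Nm d r P h
  · rw [sz_eq_zero_of_gt hdP h]
    exact Nm_nonneg d hr P

lemma Nm_pos (d : ℕ) {r : ℝ} (hr : 0 < r) {P : k[X]} (hP : P ≠ 0)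
    (hdP : P.natDegree ≤ d) : 0 < Nm d r P := by
  refine lt_of_lt_of_le ?_ (sz_le_Nm d r P hdP)
  exact mul_pos (norm_pos_iff.mpr (Polynomial.leadingCoeff_ne_zero.mpr hP)) (pow_pos hr _)

lemma Nm_exists (d : ℕ) (r : ℝ) (P : k[X]) : ∃ i, i ≤ d ∧ sz r P i = Nm d r P := by
  obtain ⟨i, hi, hie⟩ := Finset.exists_mem_eq_sup' (by simp : (Finset.range (d + 1)).Nonempty)
    (sz r P)
  refine ⟨i, ?_, hie.symm⟩
  have := Finset.mem_range.mp hi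
  omega

lemma itop_nonempty (d : ℕ) (r : ℝ) (P : k[X]) :
    ((Finset.range (d + 1)).filter (fun i => sz r P i = Nm d r P)).Nonempty := by
  obtain ⟨i, hi, hie⟩ := Nm_exists d r P
  exact ⟨i, Finset.mem_filter.mpr ⟨Finset.mem_range.mpr (by omega), hie⟩⟩

noncomputable def Itop (d : ℕ) (r : ℝ) (P : k[X]) : ℕ :=
  ((Finset.range (d + 1)).filter (fun i => sz r P i = Nm d r P)).max' (itop_nonempty d r P)

lemma Itop_mem (d : ℕ) (r : ℝ) (P : k[X]) :
    Itop d r P ∈ (Finset.range (d + 1)).filter (fun i => sz r P i = Nm d r P) :=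
  Finset.max'_mem _ _

lemma Itop_le (d : ℕ) (r : ℝ) (P : k[X]) : Itop d r P ≤ d := by
  have := Finset.mem_range.mp (Finset.mem_filter.mp (Itop_mem d r P)).1
  omega

lemma sz_Itop (d : ℕ) (r : ℝ) (P : k[X]) : sz r P (Itop d r P) = Nm d r P :=
  (Finset.mem_filter.mp (Itop_mem d r P)).2

lemma sz_lt_of_Itop_lt (d : ℕ) {r : ℝ} (hr : 0 < r) {P : k[X]} (hP : P ≠ 0)
    (hdP : P.natDegree ≤ d) {i : ℕ} (hi : Itop d r P < i) : sz r P i < Nm d r P := by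
  rcases le_or_gt i d with h | h
  · refine lt_of_le_of_ne (sz_le_Nm d r P h) (fun heq => ?_)
    have : i ≤ Itop d r P := Finset.le_max' _ i
      (Finset.mem_filter.mpr ⟨Finset.mem_range.mpr (by omega), heq⟩)
    omega
  · rw [sz_eq_zero_of_gt hdP h]
    exact Nm_pos d hr hP hdP

lemma sz_Cmul (r : ℝ) (c : k) (P : k[X]) (i : ℕ) : sz r (C c * P) i = ‖c‖ * sz r P i := by
  rw [sz, sz, Polynomial.coeff_C_mul, norm_mul, mul_assoc]

lemma Nm_Cmul (d : ℕ) {r : ℝ} (hr : 0 ≤ r) (c : k) (P : k[X]) :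
    Nm d r (C c * P) = ‖c‖ * Nm d r P := by
  apply le_antisymm
  · apply Finset.sup'_le
    intro i hi
    rw [sz_Cmul]
    have hi' : i ≤ d := by have := Finset.mem_range.mp hi; omega
    exact mul_le_mul_of_nonneg_left (sz_le_Nm d r P hi') (norm_nonneg c)
  · calc ‖c‖ * Nm d r P = ‖c‖ * sz r P (Itop d r P) := by rw [sz_Itop]
      _ = sz r (C c * P) (Itop d r P) := (sz_Cmul r c P _).symm
      _ ≤ Nm d r (C c * P) := sz_le_Nm d r _ (Itop_le d r P)

lemma sz_add_le [IsUltrametricDist k] {r : ℝ} (hr : 0 ≤ r) (P Q : k[X]) (i : ℕ) :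
    sz r (P + Q) i ≤ max (sz r P i) (sz r Q i) := by
  rw [sz, sz, sz, ← max_mul_of_nonneg _ _ (pow_nonneg hr i)]
  exact mul_le_mul_of_nonneg_right (by simpa using norm_add_le_max' (P.coeff i) (Q.coeff i))
    (pow_nonneg hr i)

lemma Nm_add_le [IsUltrametricDist k] (d : ℕ) {r : ℝ} (hr : 0 ≤ r) (P Q : k[X]) :
    Nm d r (P + Q) ≤ max (Nm d r P) (Nm d r Q) := by
  apply Finset.sup'_le
  intro i hi
  have hi' : i ≤ d := by have := Finset.mem_range.mp hi; omega
  exact le_trans (sz_add_le hr P Q i)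
    (max_le_max (sz_le_Nm d r P hi') (sz_le_Nm d r Q hi'))

lemma Nm_zero (d : ℕ) (r : ℝ) : Nm d r (0 : k[X]) = 0 := by
  rw [Nm]
  apply le_antisymm
  · apply Finset.sup'_le
    intro i _
    simp [sz]
  · refine le_trans ?_ (Finset.le_sup' (f := sz r (0 : k[X]))
      (Finset.mem_range.mpr (by omega : (0:ℕ) < d + 1)))
    simp [sz]

lemma ne_zero_of_Nm_pos {d : ℕ} {r : ℝ} {P : k[X]} (h : 0 < Nm d r P) : P ≠ 0 := by
  rintro rfl
  rw [Nm_zero] at h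
  exact lt_irrefl _ h

/-! ### Root / no-root Newton polygon criteria -/

variable [IsUltrametricDist k]

lemma noroot_aux [IsAlgClosed k] {r : ℝ} (hr : 0 < r) :
    ∀ (n : ℕ) (P : k[X]), P.natDegree ≤ n → (∀ x : k, ‖x‖ ≤ r → P.eval x ≠ 0) →
      ∀ i, 1 ≤ i → ‖P.coeff i‖ * r ^ i < ‖P.coeff 0‖ := by
  intro n
  induction n with
  | zero =>
    intro P hdeg h i hi
    have h0 : P.coeff 0 ≠ 0 := by
      rw [Polynomial.coeff_zero_eq_eval_zero]
      exact h 0 (by simp [hr.le])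
    have : P.coeff i = 0 := by
      apply Polynomial.coeff_eq_zero_of_natDegree_lt
      omega
    rw [this, norm_zero, zero_mul]
    exact norm_pos_iff.mpr h0
  | succ n ih =>
    intro P hdeg h i hi
    have h0 : P.coeff 0 ≠ 0 := by
      rw [Polynomial.coeff_zero_eq_eval_zero]
      exact h 0 (by simp [hr.le])
    rcases Nat.eq_zero_or_pos P.natDegree with hd0 | hdpos
    · have : P.coeff i = 0 := by
        apply Polynomial.coeff_eq_zero_of_natDegree_lt
        omega
      rw [this, norm_zero, zero_mul]
      exact norm_pos_iff.mpr h0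
    · have hPne : P ≠ 0 := fun hP => h 0 (by simp [hr.le]) (by simp [hP])
      have hdeg0 : P.degree ≠ 0 := (Polynomial.natDegree_pos_iff_degree_pos.mp hdpos).ne'
      obtain ⟨ρ, hρ⟩ := IsAlgClosed.exists_root P hdeg0
      have hρr : r < ‖ρ‖ := by
        by_contra hle
        exact h ρ (not_lt.mp hle) hρ
      obtain ⟨Q, hQ⟩ := Polynomial.dvd_iff_isRoot.mpr hρ
      have hQ0 : Q ≠ 0 := by
        rintro rfl
        rw [mul_zero] at hQ
        exact hPne hQ
      have hXρ : (X - C ρ : k[X]) ≠ 0 := Polynomial.X_sub_C_ne_zero ρ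
      have hPdeg : P.natDegree = Q.natDegree + 1 := by
        rw [hQ, Polynomial.natDegree_mul hXρ hQ0, Polynomial.natDegree_X_sub_C]
        omega
      have hQdeg : Q.natDegree ≤ n := by omega
      have hQroot : ∀ x : k, ‖x‖ ≤ r → Q.eval x ≠ 0 := by
        intro x hx hx0
        exact h x hx (by rw [hQ]; simp [hx0])
      have IH := ih Q hQdeg hQroot
      have hsplit : P = X * Q - C ρ * Q := by
        rw [hQ]; ring
      have hc0 : P.coeff 0 = -(ρ * Q.coeff 0) := by
        rw [hsplit, Polynomial.coeff_sub, Polynomial.mul_coeff_zero, Polynomial.coeff_C_mul,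
          Polynomial.coeff_X_zero, zero_mul, zero_sub]
      have hQc0 : Q.coeff 0 ≠ 0 := by
        intro hz
        rw [hc0, hz, mul_zero, neg_zero] at h0
        exact h0 rfl
      have hnc0 : ‖P.coeff 0‖ = ‖ρ‖ * ‖Q.coeff 0‖ := by
        rw [hc0, norm_neg, norm_mul]
      obtain ⟨j, rfl⟩ : ∃ j, i = j + 1 := ⟨i - 1, by omega⟩
      have hci : P.coeff (j + 1) = Q.coeff j - ρ * Q.coeff (j + 1) := by
        rw [hsplit, Polynomial.coeff_sub, Polynomial.coeff_X_mul, Polynomial.coeff_C_mul]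
      have hQc0pos : 0 < ‖Q.coeff 0‖ := norm_pos_iff.mpr hQc0
      have h1 : ‖Q.coeff j‖ * r ^ (j + 1) < ‖ρ‖ * ‖Q.coeff 0‖ := by
        rcases Nat.eq_zero_or_pos j with rfl | hj
        · rw [zero_add, pow_one]
          calc ‖Q.coeff 0‖ * r < ‖Q.coeff 0‖ * ‖ρ‖ :=
                mul_lt_mul_of_pos_left hρr hQc0pos
            _ = ‖ρ‖ * ‖Q.coeff 0‖ := mul_comm _ _
        · have := IH j hj
          calc ‖Q.coeff j‖ * r ^ (j + 1) = ‖Q.coeff j‖ * r ^ j * r := by ring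
            _ < ‖Q.coeff 0‖ * r := mul_lt_mul_of_pos_right this hr
            _ < ‖Q.coeff 0‖ * ‖ρ‖ := mul_lt_mul_of_pos_left hρr hQc0pos
            _ = ‖ρ‖ * ‖Q.coeff 0‖ := mul_comm _ _
      have h2 : ‖ρ * Q.coeff (j + 1)‖ * r ^ (j + 1) < ‖ρ‖ * ‖Q.coeff 0‖ := by
        rw [norm_mul, mul_assoc]
        exact mul_lt_mul_of_pos_left (IH (j + 1) (by omega)) (lt_trans hr hρr)
      rw [hci, hnc0]
      calc ‖Q.coeff j - ρ * Q.coeff (j + 1)‖ * r ^ (j + 1)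
          ≤ max (‖Q.coeff j‖ * r ^ (j + 1)) (‖ρ * Q.coeff (j + 1)‖ * r ^ (j + 1)) := by
            rw [← max_mul_of_nonneg _ _ (pow_nonneg hr.le (j + 1))]
            exact mul_le_mul_of_nonneg_right (norm_sub_le_max' _ _) (pow_nonneg hr.le (j + 1))
        _ < ‖ρ‖ * ‖Q.coeff 0‖ := max_lt h1 h2

lemma noroot [IsAlgClosed k] {r : ℝ} (hr : 0 < r) (P : k[X])
    (h : ∀ x : k, ‖x‖ ≤ r → P.eval x ≠ 0) :
    ∀ i, 1 ≤ i → ‖P.coeff i‖ * r ^ i < ‖P.coeff 0‖ :=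
  noroot_aux hr P.natDegree P le_rfl h

lemma eval_ne {r : ℝ} (hr : 0 < r) (P : k[X])
    (h : ∀ i, 1 ≤ i → ‖P.coeff i‖ * r ^ i < ‖P.coeff 0‖) {x : k} (hx : ‖x‖ ≤ r) :
    P.eval x ≠ 0 := by
  have h0pos : 0 < ‖P.coeff 0‖ := lt_of_le_of_lt (by positivity) (h 1 le_rfl)
  have heval : P.eval x = (∑ i ∈ Finset.range P.natDegree, P.coeff (i + 1) * x ^ (i + 1))
      + P.coeff 0 := by
    rw [Polynomial.eval_eq_sum_range, Finset.sum_range_succ']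
    simp
  have htail : ‖∑ i ∈ Finset.range P.natDegree, P.coeff (i + 1) * x ^ (i + 1)‖ < ‖P.coeff 0‖ := by
    apply norm_sum_lt' _ _ h0pos
    intro i _
    calc ‖P.coeff (i + 1) * x ^ (i + 1)‖ = ‖P.coeff (i + 1)‖ * ‖x‖ ^ (i + 1) := by
          rw [norm_mul, norm_pow]
      _ ≤ ‖P.coeff (i + 1)‖ * r ^ (i + 1) := by
          exact mul_le_mul_of_nonneg_left (pow_le_pow_left₀ (norm_nonneg x) hx (i + 1))
            (norm_nonneg _)
      _ < ‖P.coeff 0‖ := h (i + 1) (by omega)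
  rw [heval]
  intro hzero
  have hne : ‖(∑ i ∈ Finset.range P.natDegree, P.coeff (i + 1) * x ^ (i + 1)) + P.coeff 0‖
      = ‖P.coeff 0‖ := by
    rw [add_comm]
    exact norm_add_eq_left htail
  rw [hzero, norm_zero] at hne
  exact h0pos.ne' hne.symm

/-! ### Wronskian coefficients -/

lemma Wcoeff (u v : k[X]) (s : ℕ) :
    (derivative u * v - u * derivative v).coeff s
      = ∑ z ∈ Finset.HasAntidiagonal.antidiagonal (s + 1),
          ((z.1 : k) - (z.2 : k)) * (u.coeff z.1 * v.coeff z.2) := by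
  have h1 : (derivative u * v).coeff s
      = ∑ z ∈ Finset.HasAntidiagonal.antidiagonal (s + 1), (z.1 : k) * (u.coeff z.1 * v.coeff z.2) := by
    rw [Polynomial.coeff_mul]
    rw [Finset.Nat.sum_antidiagonal_succ
      (f := fun z => (z.1 : k) * (u.coeff z.1 * v.coeff z.2))]
    simp only [Nat.cast_zero, zero_mul, zero_add, Nat.cast_add, Nat.cast_one]
    apply Finset.sum_congr rfl
    intro z _
    rw [Polynomial.coeff_derivative]
    push_cast
    ring
  have h2 : (u * derivative v).coeff s
      = ∑ z ∈ Finset.HasAntidiagonal.antidiagonal (s + 1), (z.2 : k) * (u.coeff z.1 * v.coeff z.2) := by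
    rw [Polynomial.coeff_mul]
    rw [Finset.Nat.sum_antidiagonal_succ'
      (f := fun z => (z.2 : k) * (u.coeff z.1 * v.coeff z.2))]
    simp only [Nat.cast_zero, zero_mul, zero_add, Nat.cast_add, Nat.cast_one]
    apply Finset.sum_congr rfl
    intro z _
    rw [Polynomial.coeff_derivative]
    push_cast
    ring
  rw [Polynomial.coeff_sub, h1, h2, ← Finset.sum_sub_distrib]
  apply Finset.sum_congr rfl
  intro z _
  ring

/-! ### The two-distinct-top-indices case: the Wronskian has a root in the disk -/

lemma AB [IsAlgClosed k] (d : ℕ) {r : ℝ}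
    (hnorm : ∀ m : ℕ, 1 ≤ m → m ≤ d → ‖(m : k)‖ = 1) (hr : 0 < r)
    (u v : k[X]) (hu : u ≠ 0) (hv : v ≠ 0) (hdu : u.natDegree ≤ d) (hdv : v.natDegree ≤ d)
    (hne : Itop d r u ≠ Itop d r v) (h2 : 2 ≤ Itop d r u + Itop d r v) :
    ∃ x : k, ‖x‖ ≤ r ∧ (derivative u * v - u * derivative v).eval x = 0 := by
  by_contra hcon
  push_neg at hcon
  have hcon' : ∀ x : k, ‖x‖ ≤ r → (derivative u * v - u * derivative v).eval x ≠ 0 := by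
    intro x hx
    exact (hcon x hx)
  set W := derivative u * v - u * derivative v with hWdef
  set p := Itop d r u with hpdef
  set q := Itop d r v with hqdef
  set s := p + q - 1 with hsdef
  have hs1 : s + 1 = p + q := by omega
  have hsge : 1 ≤ s := by omega
  have hpd : p ≤ d := Itop_le d r u
  have hqd : q ≤ d := Itop_le d r v
  have hNu : 0 < Nm d r u := Nm_pos d hr hu hdu
  have hNv : 0 < Nm d r v := Nm_pos d hr hv hdv
  have hup : ‖u.coeff p‖ * r ^ p = Nm d r u := sz_Itop d r u
  have hvq : ‖v.coeff q‖ * r ^ q = Nm d r v := sz_Itop d r v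
  have hrp : (0:ℝ) < r ^ (s + 1) := pow_pos hr _
  set T := ((p : k) - (q : k)) * (u.coeff p * v.coeff q) with hTdef
  have hTnorm : ‖T‖ * r ^ (s + 1) = Nm d r u * Nm d r v := by
    rw [hTdef, hs1, pow_add, norm_mul, norm_mul, norm_cast_sub_eq_one d hnorm hpd hqd hne,
      ← hup, ← hvq]
    ring
  have hTpos : 0 < ‖T‖ := by
    rcases (norm_nonneg T).lt_or_eq with h | h
    · exact h
    · exfalso
      have := hTnorm
      rw [← h, zero_mul] at this
      exact absurd this.symm (ne_of_gt (mul_pos hNu hNv))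
  have hmem : ((p, q) : ℕ × ℕ) ∈ Finset.HasAntidiagonal.antidiagonal (s + 1) :=
    Finset.HasAntidiagonal.mem_antidiagonal.mpr hs1.symm
  have hWs : W.coeff s = T + ∑ z ∈ (Finset.HasAntidiagonal.antidiagonal (s + 1)).erase (p, q),
      ((z.1 : k) - (z.2 : k)) * (u.coeff z.1 * v.coeff z.2) := by
    rw [hWdef, Wcoeff]
    exact (Finset.add_sum_erase _ _ hmem).symm
  have hrest : ‖∑ z ∈ (Finset.HasAntidiagonal.antidiagonal (s + 1)).erase (p, q),
      ((z.1 : k) - (z.2 : k)) * (u.coeff z.1 * v.coeff z.2)‖ < ‖T‖ := by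
    apply norm_sum_lt' _ _ hTpos
    intro z hz
    have hz1 : z ∈ Finset.HasAntidiagonal.antidiagonal (s + 1) := Finset.mem_of_mem_erase hz
    have hzne : z ≠ (p, q) := Finset.ne_of_mem_erase hz
    have hzsum : z.1 + z.2 = s + 1 := Finset.HasAntidiagonal.mem_antidiagonal.mp hz1
    have hscale : ‖((z.1 : k) - (z.2 : k)) * (u.coeff z.1 * v.coeff z.2)‖ * r ^ (s + 1)
        ≤ sz r u z.1 * sz r v z.2 := by
      rw [← hzsum, pow_add, norm_mul, norm_mul, sz, sz]
      calc ‖(z.1 : k) - (z.2 : k)‖ * (‖u.coeff z.1‖ * ‖v.coeff z.2‖) * (r ^ z.1 * r ^ z.2)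
          ≤ 1 * (‖u.coeff z.1‖ * ‖v.coeff z.2‖) * (r ^ z.1 * r ^ z.2) := by
            apply mul_le_mul_of_nonneg_right
              (mul_le_mul_of_nonneg_right (norm_cast_sub_le_one z.1 z.2) (by positivity))
              (by positivity)
        _ = ‖u.coeff z.1‖ * r ^ z.1 * (‖v.coeff z.2‖ * r ^ z.2) := by ring
    have hlt : sz r u z.1 * sz r v z.2 < Nm d r u * Nm d r v := by
      have hz1ne : z.1 ≠ p := by
        intro h
        apply hzne
        have : z.2 = q := by omega
        exact Prod.ext h this
      rcases lt_or_gt_of_ne hz1ne with hlt1 | hgt1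
      · have hz2gt : q < z.2 := by omega
        calc sz r u z.1 * sz r v z.2 ≤ Nm d r u * sz r v z.2 :=
              mul_le_mul_of_nonneg_right (sz_le_Nm' d hr.le hdu z.1) (sz_nonneg hr.le v z.2)
          _ < Nm d r u * Nm d r v :=
              mul_lt_mul_of_pos_left (sz_lt_of_Itop_lt d hr hv hdv hz2gt) hNu
      · calc sz r u z.1 * sz r v z.2 ≤ sz r u z.1 * Nm d r v :=
              mul_le_mul_of_nonneg_left (sz_le_Nm' d hr.le hdv z.2) (sz_nonneg hr.le u z.1)
          _ < Nm d r u * Nm d r v :=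
              mul_lt_mul_of_pos_right (sz_lt_of_Itop_lt d hr hu hdu hgt1) hNv
    have := lt_of_le_of_lt hscale (hlt.trans_eq hTnorm.symm)
    exact lt_of_mul_lt_mul_right this hrp.le
  have hWsnorm : ‖W.coeff s‖ = ‖T‖ := by
    rw [hWs]
    exact norm_add_eq_left hrest
  have hnr := noroot hr W hcon' s hsge
  have hW0 : ‖W.coeff 0‖ * r ≤ Nm d r u * Nm d r v := by
    have hW0sum := Wcoeff u v 0
    have hB : (0:ℝ) ≤ Nm d r u * Nm d r v / r := by positivity
    have hbound : ‖W.coeff 0‖ ≤ Nm d r u * Nm d r v / r := by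
      rw [hW0sum]
      apply norm_sum_le' _ _ hB
      intro z hz
      have hzsum : z.1 + z.2 = 1 := by
        have := Finset.HasAntidiagonal.mem_antidiagonal.mp hz
        omega
      rw [le_div_iff₀ hr]
      have hrr : r ^ z.1 * r ^ z.2 = r := by rw [← pow_add, hzsum, pow_one]
      have h1 : ‖((z.1 : k) - (z.2 : k)) * (u.coeff z.1 * v.coeff z.2)‖
          ≤ ‖u.coeff z.1‖ * ‖v.coeff z.2‖ := by
        rw [norm_mul, norm_mul]
        calc ‖(z.1 : k) - (z.2 : k)‖ * (‖u.coeff z.1‖ * ‖v.coeff z.2‖)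
            ≤ 1 * (‖u.coeff z.1‖ * ‖v.coeff z.2‖) :=
              mul_le_mul_of_nonneg_right (norm_cast_sub_le_one z.1 z.2) (by positivity)
          _ = ‖u.coeff z.1‖ * ‖v.coeff z.2‖ := one_mul _
      have : ‖((z.1 : k) - (z.2 : k)) * (u.coeff z.1 * v.coeff z.2)‖ * r
          ≤ sz r u z.1 * sz r v z.2 := by
        calc ‖((z.1 : k) - (z.2 : k)) * (u.coeff z.1 * v.coeff z.2)‖ * r
            ≤ (‖u.coeff z.1‖ * ‖v.coeff z.2‖) * r := mul_le_mul_of_nonneg_right h1 hr.le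
          _ = (‖u.coeff z.1‖ * ‖v.coeff z.2‖) * (r ^ z.1 * r ^ z.2) := by rw [hrr]
          _ = sz r u z.1 * sz r v z.2 := by rw [sz, sz]; ring
      refine le_trans this ?_
      exact mul_le_mul (sz_le_Nm' d hr.le hdu z.1) (sz_le_Nm' d hr.le hdv z.2)
        (sz_nonneg hr.le v z.2) (Nm_nonneg d hr.le u)
    calc ‖W.coeff 0‖ * r ≤ (Nm d r u * Nm d r v / r) * r :=
          mul_le_mul_of_nonneg_right hbound hr.le
      _ = Nm d r u * Nm d r v := by field_simp
  have hfinal : ‖W.coeff s‖ * r ^ (s + 1) < Nm d r u * Nm d r v := by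
    calc ‖W.coeff s‖ * r ^ (s + 1) = (‖W.coeff s‖ * r ^ s) * r := by ring
      _ < ‖W.coeff 0‖ * r := mul_lt_mul_of_pos_right hnr hr
      _ ≤ Nm d r u * Nm d r v := hW0
  rw [hWsnorm, hTnorm] at hfinal
  exact lt_irrefl _ hfinal


/-! ### Orthogonal pairs and the reduction step -/

def OB (d : ℕ) (r : ℝ) (u v : k[X]) : Prop :=
  ∀ s t : k, max (‖s‖ * Nm d r u) (‖t‖ * Nm d r v) ≤ Nm d r (C s * u + C t * v)

lemma ob_of_min (d : ℕ) {r : ℝ} (hr : 0 < r) {u v : k[X]}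
    (hm : ∀ μ : k, Nm d r v ≤ Nm d r (v + C μ * u)) : OB d r u v := by
  intro s t
  rcases eq_or_ne t 0 with rfl | ht
  · simp only [map_zero, zero_mul, add_zero, norm_zero]
    rw [Nm_Cmul d hr.le]
    exact max_le le_rfl (mul_nonneg (norm_nonneg s) (Nm_nonneg d hr.le u))
  · have h1 : ‖t‖ * Nm d r v ≤ Nm d r (C s * u + C t * v) := by
      have hst : (s / t) * t = s := div_mul_cancel₀ s ht
      have hrw : C s * u + C t * v = C t * (v + C (s / t) * u) := by
        have h' : C t * (v + C (s / t) * u) = C t * v + C ((s / t) * t) * u := by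
          rw [map_mul]; ring
        rw [h', hst]
        ring
      rw [hrw, Nm_Cmul d hr.le]
      exact mul_le_mul_of_nonneg_left (hm (s / t)) (norm_nonneg t)
    refine max_le ?_ h1
    rcases eq_or_ne s 0 with rfl | hs
    · simp only [norm_zero, zero_mul]
      exact le_trans (mul_nonneg (norm_nonneg t) (Nm_nonneg d hr.le v)) h1
    · by_contra hlt
      push_neg at hlt
      have h3 : C s * u = (C s * u + C t * v) + C (-t) * v := by
        rw [map_neg]; ring
      have h4 : Nm d r (C s * u) ≤ max (Nm d r (C s * u + C t * v)) (Nm d r (C (-t) * v)) := by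
        calc Nm d r (C s * u) = Nm d r ((C s * u + C t * v) + C (-t) * v) := by rw [← h3]
          _ ≤ _ := Nm_add_le d hr.le _ _
      rw [Nm_Cmul d hr.le, Nm_Cmul d hr.le, norm_neg] at h4
      have h5 : ‖t‖ * Nm d r v < ‖s‖ * Nm d r u := lt_of_le_of_lt h1 hlt
      exact absurd h4 (not_le.mpr (max_lt hlt h5))

lemma OB_symm {d : ℕ} {r : ℝ} {u v : k[X]} (h : OB d r u v) : OB d r v u := by
  intro s t
  rw [max_comm, add_comm]
  exact h t s

lemma combo_sz (d : ℕ) {r : ℝ} (hr : 0 < r) {u v : k[X]}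
    (hu : u ≠ 0) (hv : v ≠ 0) (hdu : u.natDegree ≤ d) (hdv : v.natDegree ≤ d)
    (hob : OB d r u v) (hIu : Itop d r u ≤ 1) (hIv : Itop d r v ≤ 1)
    (s t : k) (hne : C s * u + C t * v ≠ 0) :
    ∀ i, 2 ≤ i → sz r (C s * u + C t * v) i < Nm d r (C s * u + C t * v) := by
  intro i hi
  have hszu : sz r u i < Nm d r u := sz_lt_of_Itop_lt d hr hu hdu (by omega)
  have hszv : sz r v i < Nm d r v := sz_lt_of_Itop_lt d hr hv hdv (by omega)
  rcases eq_or_ne s 0 with rfl | hs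
  · rcases eq_or_ne t 0 with rfl | ht
    · exact absurd (by simp) hne
    · have hE : C (0:k) * u + C t * v = C t * v := by simp
      rw [hE, sz_Cmul, Nm_Cmul d hr.le]
      exact mul_lt_mul_of_pos_left hszv (norm_pos_iff.mpr ht)
  · rcases eq_or_ne t 0 with rfl | ht
    · have hE : C s * u + C (0:k) * v = C s * u := by simp
      rw [hE, sz_Cmul, Nm_Cmul d hr.le]
      exact mul_lt_mul_of_pos_left hszu (norm_pos_iff.mpr hs)
    · have h1 : sz r (C s * u + C t * v) i ≤ max (sz r (C s * u) i) (sz r (C t * v) i) :=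
        sz_add_le hr.le _ _ i
      rw [sz_Cmul, sz_Cmul] at h1
      have h2 : max (‖s‖ * sz r u i) (‖t‖ * sz r v i)
          < max (‖s‖ * Nm d r u) (‖t‖ * Nm d r v) :=
        max_lt_max (mul_lt_mul_of_pos_left hszu (norm_pos_iff.mpr hs))
          (mul_lt_mul_of_pos_left hszv (norm_pos_iff.mpr ht))
      exact lt_of_le_of_lt h1 (lt_of_lt_of_le h2 (hob s t))

lemma key [IsAlgClosed k] (d : ℕ) {r : ℝ}
    (hnorm : ∀ m : ℕ, 1 ≤ m → m ≤ d → ‖(m : k)‖ = 1) (hr : 0 < r)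
    (u v : k[X]) (hu : u ≠ 0) (hv : v ≠ 0) (hdu : u.natDegree ≤ d) (hdv : v.natDegree ≤ d)
    (hob : OB d r u v) :
    (∃ x : k, ‖x‖ ≤ r ∧ (derivative u * v - u * derivative v).eval x = 0)
      ∨ (Itop d r u ≤ 1 ∧ Itop d r v ≤ 1) := by
  by_cases hsmall : Itop d r u ≤ 1 ∧ Itop d r v ≤ 1
  · exact Or.inr hsmall
  left
  rcases ne_or_eq (Itop d r u) (Itop d r v) with hne | heq
  · exact AB d hnorm hr u v hu hv hdu hdv hne (by omega)
  · set p := Itop d r u with hpdef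
    have hp2 : 2 ≤ p := by omega
    have hNu : 0 < Nm d r u := Nm_pos d hr hu hdu
    have hNv : 0 < Nm d r v := Nm_pos d hr hv hdv
    have hup : sz r u p = Nm d r u := sz_Itop d r u
    have hvp' : sz r v p = Nm d r v := by
      have := sz_Itop d r v
      rwa [← heq] at this
    have hupne : u.coeff p ≠ 0 := by
      intro h
      rw [sz, h, norm_zero, zero_mul] at hup
      rw [← hup] at hNu
      exact lt_irrefl _ hNu
    have hvpne : v.coeff p ≠ 0 := by
      intro h
      rw [sz, h, norm_zero, zero_mul] at hvp'
      rw [← hvp'] at hNv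
      exact lt_irrefl _ hNv
    set lam := u.coeff p / v.coeff p with hlamdef
    have hlamne : lam ≠ 0 := div_ne_zero hupne hvpne
    have hlamnorm : ‖lam‖ * Nm d r v = Nm d r u := by
      have hvpn : ‖v.coeff p‖ ≠ 0 := norm_ne_zero_iff.mpr hvpne
      rw [hlamdef, norm_div, ← hup, ← hvp']
      simp only [sz]
      field_simp
    set u' := u + C (-lam) * v with hu'def
    have hu'eq : u' = u - C lam * v := by rw [hu'def, map_neg]; ring
    have hNu' : Nm d r u' = Nm d r u := by
      apply le_antisymm
      · have h0 : Nm d r u' ≤ max (Nm d r u) (Nm d r (C (-lam) * v)) := by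
          rw [hu'def]
          exact Nm_add_le d hr.le _ _
        rwa [Nm_Cmul d hr.le, norm_neg, hlamnorm, max_self] at h0
      · have h := hob 1 (-lam)
        rw [map_one, one_mul] at h
        simp only [norm_one, one_mul] at h
        exact le_trans (le_max_left _ _) (le_trans h (le_of_eq (by rw [hu'def])))
    have hu'ne : u' ≠ 0 := ne_zero_of_Nm_pos (by rw [hNu']; exact hNu)
    have hdu' : u'.natDegree ≤ d := by
      rw [hu'eq]
      refine le_trans (Polynomial.natDegree_sub_le _ _) ?_
      exact max_le hdu (le_trans (Polynomial.natDegree_C_mul_le _ _) hdv)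
    have hbig : ∀ i, p < i → sz r u' i < Nm d r u := by
      intro i hpi
      have h1 : sz r u' i ≤ max (sz r u i) (sz r (C (-lam) * v) i) := by
        calc sz r u' i = sz r (u + C (-lam) * v) i := by rw [hu'def]
          _ ≤ _ := sz_add_le hr.le _ _ i
      have h2 : sz r u i < Nm d r u := sz_lt_of_Itop_lt d hr hu hdu hpi
      have h3 : sz r (C (-lam) * v) i < Nm d r u := by
        rw [sz_Cmul, norm_neg]
        calc ‖lam‖ * sz r v i < ‖lam‖ * Nm d r v :=
              mul_lt_mul_of_pos_left
                (sz_lt_of_Itop_lt d hr hv hdv (by omega)) (norm_pos_iff.mpr hlamne)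
          _ = Nm d r u := hlamnorm
      exact lt_of_le_of_lt h1 (max_lt h2 h3)
    have hatp : sz r u' p < Nm d r u := by
      have hco : u'.coeff p = 0 := by
        rw [hu'eq, Polynomial.coeff_sub, Polynomial.coeff_C_mul, hlamdef,
          div_mul_cancel₀ _ hvpne, sub_self]
      rw [sz, hco, norm_zero, zero_mul]
      exact hNu
    have hIu' : Itop d r u' < p := by
      by_contra hge
      push_neg at hge
      have hsz := sz_Itop d r u'
      rw [hNu'] at hsz
      rcases eq_or_lt_of_le hge with heqp | hltp
      · rw [← heqp] at hsz
        rw [hsz] at hatp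
        exact lt_irrefl _ hatp
      · have := hbig _ hltp
        rw [hsz] at this
        exact lt_irrefl _ this
    have hob' : OB d r u' v := by
      intro s t
      have hrw : C s * u' + C t * v = C s * u + C (t - s * lam) * v := by
        rw [hu'def]
        simp only [map_sub, map_mul, map_neg]
        ring
      rw [hrw, hNu']
      rcases le_or_gt ‖t‖ ‖s * lam‖ with hle | hgt
      · have h1 : ‖t‖ * Nm d r v ≤ ‖s‖ * Nm d r u := by
          calc ‖t‖ * Nm d r v ≤ ‖s * lam‖ * Nm d r v :=
                mul_le_mul_of_nonneg_right hle (Nm_nonneg d hr.le v)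
            _ = ‖s‖ * (‖lam‖ * Nm d r v) := by rw [norm_mul]; ring
            _ = ‖s‖ * Nm d r u := by rw [hlamnorm]
        refine max_le ?_ ?_
        · exact le_trans (le_max_left _ _) (hob s (t - s * lam))
        · exact le_trans h1 (le_trans (le_max_left _ _) (hob s (t - s * lam)))
      · have h2 : ‖t - s * lam‖ = ‖t‖ := norm_sub_eq_left hgt
        have h := hob s (t - s * lam)
        rw [h2] at h
        exact h
    have hneq : Itop d r v ≠ Itop d r u' := by omega
    obtain ⟨x, hx, hW⟩ := AB d hnorm hr v u' hv hu'ne hdv hdu' hneq (by omega)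
    refine ⟨x, hx, ?_⟩
    have hd' : derivative u' = derivative u + C (-lam) * derivative v := by
      rw [hu'def, derivative_add, Polynomial.derivative_C_mul]
    have hWrel : derivative u * v - u * derivative v
        = -(derivative v * u' - v * derivative u') := by
      rw [hu'def, hd']
      ring
    rw [hWrel, Polynomial.eval_neg, hW, neg_zero]

end Stmt9Aux

open Stmt9Aux

/-- Application 2, case of residue characteristic `0` or `> d`: if `φ = f/g` maps
the closed disk `D(a,r)` onto all of `P¹(k)`, then it has a critical point in the
same closed disk. -/
theorem stmt9 {k : Type*} [NormedField k] [IsAlgClosed k] [CharZero k]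
    [CompleteSpace k] [IsUltrametricDist k]
    (f g : Polynomial k) (hco : IsCoprime f g)
    (hd : 1 ≤ max f.natDegree g.natDegree)
    (hres : ∀ q : ℕ, q.Prime → q ≤ max f.natDegree g.natDegree → ‖(q : k)‖ = 1)
    (a : k) (r : ℝ) (hr : 0 ≤ r)
    (honto : ∀ w : k, ∃ x : k, ‖x - a‖ ≤ r ∧ f.eval x = w * g.eval x)
    (hinfty : ∃ x : k, ‖x - a‖ ≤ r ∧ g.eval x = 0) :
    ∃ c : k, ‖c - a‖ ≤ r ∧ (derivative f * g - f * derivative g).eval c = 0 := by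
  classical
  set d := max f.natDegree g.natDegree with hddef
  have hnorm : ∀ m : ℕ, 1 ≤ m → m ≤ d → ‖(m : k)‖ = 1 := norm_nat d hres
  obtain ⟨b, hbr, hgb⟩ := hinfty
  have hfb : f.eval b ≠ 0 := by
    obtain ⟨p', q', hpq⟩ := hco
    intro h0
    have h1 := congrArg (Polynomial.eval b) hpq
    simp only [Polynomial.eval_add, Polynomial.eval_mul, Polynomial.eval_one, h0, hgb,
      mul_zero, add_zero] at h1
    exact one_ne_zero h1.symm
  have hfne : f ≠ 0 := fun h => hfb (by rw [h]; simp)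
  have hgne : g ≠ 0 := by
    intro h
    rw [h] at hco
    have hunit := isCoprime_zero_right.mp hco
    have hdeg := Polynomial.natDegree_eq_zero_of_isUnit hunit
    have hd0 : d = 0 := by
      rw [hddef, h]
      simp [hdeg]
    omega
  have hrpos : 0 < r := by
    rcases hr.lt_or_eq with h | h
    · exact h
    · exfalso
      obtain ⟨x, hx, hfx⟩ := honto 0
      rw [← h] at hx hbr
      have hxa : x = a := by rwa [norm_le_zero_iff, sub_eq_zero] at hx
      have hba : b = a := by rwa [norm_le_zero_iff, sub_eq_zero] at hbr
      rw [zero_mul] at hfx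
      exact hfb (by rw [hba, ← hxa]; exact hfx)
  set F := f.comp (X + C b) with hFdef
  set G := g.comp (X + C b) with hGdef
  have hFeval : ∀ t : k, F.eval t = f.eval (t + b) := by
    intro t; rw [hFdef, Polynomial.eval_comp]; simp
  have hGeval : ∀ t : k, G.eval t = g.eval (t + b) := by
    intro t; rw [hGdef, Polynomial.eval_comp]; simp
  have hF0 : F.coeff 0 = f.eval b := by
    rw [Polynomial.coeff_zero_eq_eval_zero, hFeval, zero_add]
  have hG0 : G.coeff 0 = 0 := by
    rw [Polynomial.coeff_zero_eq_eval_zero, hGeval, zero_add]; exact hgb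
  have hFne : F ≠ 0 := by
    intro h
    apply hfb
    rw [← hF0, h, Polynomial.coeff_zero]
  have hGne : G ≠ 0 := by
    intro h
    apply hgne
    have hgg : g = G.comp (X - C b) := by
      rw [hGdef, Polynomial.comp_assoc]
      simp
    rw [hgg, h, Polynomial.zero_comp]
  have hdF : F.natDegree ≤ d := by
    refine le_trans Polynomial.natDegree_comp_le ?_
    rw [Polynomial.natDegree_X_add_C, mul_one]
    exact le_max_left _ _
  have hdG : G.natDegree ≤ d := by
    refine le_trans Polynomial.natDegree_comp_le ?_
    rw [Polynomial.natDegree_X_add_C, mul_one]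
    exact le_max_right _ _
  have hontoF : ∀ w : k, ∃ t : k, ‖t‖ ≤ r ∧ F.eval t = w * G.eval t := by
    intro w
    obtain ⟨x, hx, hfx⟩ := honto w
    refine ⟨x - b, ?_, ?_⟩
    · have hxb : x - b = (x - a) - (b - a) := by ring
      rw [hxb]
      exact le_trans (norm_sub_le_max' _ _) (max_le hx hbr)
    · rw [hFeval, hGeval, sub_add_cancel]
      exact hfx
  have hWcomp : derivative F * G - F * derivative G
      = (derivative f * g - f * derivative g).comp (X + C b) := by
    have hdF' : derivative F = (derivative f).comp (X + C b) := by
      rw [hFdef, Polynomial.derivative_comp]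
      simp
    have hdG' : derivative G = (derivative g).comp (X + C b) := by
      rw [hGdef, Polynomial.derivative_comp]
      simp
    rw [Polynomial.sub_comp, Polynomial.mul_comp, Polynomial.mul_comp, hdF', hdG']
  suffices hsuf : ∃ x : k, ‖x‖ ≤ r ∧ (derivative F * G - F * derivative G).eval x = 0 by
    obtain ⟨x, hx, hW⟩ := hsuf
    refine ⟨x + b, ?_, ?_⟩
    · have hxb : x + b - a = x + (b - a) := by ring
      rw [hxb]
      exact le_trans (norm_add_le_max' _ _) (max_le hx hbr)
    · rw [hWcomp, Polynomial.eval_comp] at hW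
      simpa using hW
  set Cs := (Finset.range (d + 1)).filter (fun i => F.coeff i ≠ 0) with hCsdef
  have hCsne : Cs.Nonempty :=
    ⟨0, Finset.mem_filter.mpr ⟨Finset.mem_range.mpr (by omega), by rw [hF0]; exact hfb⟩⟩
  obtain ⟨i₀, hi₀, hmin₀⟩ := Cs.exists_min_image
    (fun i => Nm d r (G - C (G.coeff i / F.coeff i) * F)) hCsne
  set lam0 := G.coeff i₀ / F.coeff i₀ with hlam0def
  set v := G - C lam0 * F with hvdef
  have hminv : ∀ μ : k, Nm d r v ≤ Nm d r (G - C μ * F) := by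
    intro μ
    obtain ⟨j₀, hj₀, hjmin⟩ := Cs.exists_min_image
      (fun i => ‖μ - G.coeff i / F.coeff i‖) hCsne
    have step : Nm d r (G - C (G.coeff j₀ / F.coeff j₀) * F) ≤ Nm d r (G - C μ * F) := by
      apply Finset.sup'_le
      intro i hi
      have hid : i ≤ d := by have := Finset.mem_range.mp hi; omega
      by_cases hFi : F.coeff i = 0
      · have heq : sz r (G - C (G.coeff j₀ / F.coeff j₀) * F) i = sz r (G - C μ * F) i := by
          rw [sz, sz, Polynomial.coeff_sub, Polynomial.coeff_sub, Polynomial.coeff_C_mul,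
            Polynomial.coeff_C_mul, hFi, mul_zero, mul_zero]
        rw [heq]
        exact sz_le_Nm d r _ hid
      · have hiC : i ∈ Cs := Finset.mem_filter.mpr ⟨hi, hFi⟩
        have hj := hjmin i hiC
        have hfac : ∀ c : k, G.coeff i - c * F.coeff i
            = F.coeff i * (G.coeff i / F.coeff i - c) := by
          intro c
          field_simp
        have hkey : ‖G.coeff i - (G.coeff j₀ / F.coeff j₀) * F.coeff i‖
            ≤ ‖G.coeff i - μ * F.coeff i‖ := by
          rw [hfac (G.coeff j₀ / F.coeff j₀), hfac μ, norm_mul, norm_mul]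
          apply mul_le_mul_of_nonneg_left _ (norm_nonneg _)
          calc ‖G.coeff i / F.coeff i - G.coeff j₀ / F.coeff j₀‖
              ≤ max ‖G.coeff i / F.coeff i - μ‖ ‖μ - G.coeff j₀ / F.coeff j₀‖ := by
                have hsplit : G.coeff i / F.coeff i - G.coeff j₀ / F.coeff j₀
                    = (G.coeff i / F.coeff i - μ) + (μ - G.coeff j₀ / F.coeff j₀) := by ring
                rw [hsplit]
                exact norm_add_le_max' _ _
            _ ≤ ‖G.coeff i / F.coeff i - μ‖ := by
                apply max_le le_rfl
                refine le_trans hj (le_of_eq ?_)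
                rw [norm_sub_rev]
        calc sz r (G - C (G.coeff j₀ / F.coeff j₀) * F) i
            = ‖G.coeff i - (G.coeff j₀ / F.coeff j₀) * F.coeff i‖ * r ^ i := by
              rw [sz, Polynomial.coeff_sub, Polynomial.coeff_C_mul]
          _ ≤ ‖G.coeff i - μ * F.coeff i‖ * r ^ i :=
              mul_le_mul_of_nonneg_right hkey (by positivity)
          _ = sz r (G - C μ * F) i := by
              rw [sz, Polynomial.coeff_sub, Polynomial.coeff_C_mul]
          _ ≤ Nm d r (G - C μ * F) := sz_le_Nm d r _ hid
    exact le_trans (hmin₀ j₀ hj₀) step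
  have hvne : v ≠ 0 := by
    intro h
    have hGF : G = C lam0 * F := by
      have := sub_eq_zero.mp (hvdef ▸ h)
      exact this
    have h0 : (0 : k) = lam0 * F.coeff 0 := by
      rw [← hG0, hGF, Polynomial.coeff_C_mul]
    have hlam00 : lam0 = 0 := by
      rcases mul_eq_zero.mp h0.symm with h' | h'
      · exact h'
      · exact absurd h' (by rw [hF0]; exact hfb)
    rw [hlam00, map_zero, zero_mul] at hGF
    exact hGne hGF
  have hdv : v.natDegree ≤ d := by
    rw [hvdef]
    exact le_trans (Polynomial.natDegree_sub_le _ _)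
      (max_le hdG (le_trans (Polynomial.natDegree_C_mul_le _ _) hdF))
  have hm : ∀ μ : k, Nm d r v ≤ Nm d r (v + C μ * F) := by
    intro μ
    have hvmu : v + C μ * F = G - C (lam0 - μ) * F := by
      rw [hvdef, map_sub]
      ring
    rw [hvmu]
    exact hminv (lam0 - μ)
  have hob : OB d r F v := ob_of_min d hrpos hm
  rcases key d hnorm hrpos F v hFne hvne hdF hdv hob with ⟨x, hx, hW⟩ | ⟨hIF, hIv⟩
  · refine ⟨x, hx, ?_⟩
    have hWrel : derivative F * v - F * derivative v = derivative F * G - F * derivative G := by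
      rw [hvdef, derivative_sub, Polynomial.derivative_C_mul]
      ring
    rw [← hWrel]
    exact hW
  · exfalso
    have hGcombo : G = C lam0 * F + C 1 * v := by
      rw [hvdef, map_one]
      ring
    have hgsz : ∀ i, 2 ≤ i → sz r G i < Nm d r G := by
      intro i hi
      have h := combo_sz d hrpos hFne hvne hdF hdv hob hIF hIv lam0 1
        (by rw [← hGcombo]; exact hGne) i hi
      rwa [← hGcombo] at h
    have hNG : 0 < Nm d r G := Nm_pos d hrpos hGne hdG
    have hNmG1 : Nm d r G = sz r G 1 := by
      obtain ⟨j, hjd, hj⟩ := Nm_exists d r G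
      rcases Nat.lt_or_ge j 2 with hj2 | hj2
      · interval_cases j
        · exfalso
          rw [sz, hG0, norm_zero, zero_mul] at hj
          rw [← hj] at hNG
          exact lt_irrefl _ hNG
        · exact hj.symm
      · exfalso
        have h := hgsz j hj2
        rw [hj] at h
        exact lt_irrefl _ h
    have hG1ne : G.coeff 1 ≠ 0 := by
      intro h
      rw [sz, h, norm_zero, zero_mul] at hNmG1
      rw [hNmG1] at hNG
      exact lt_irrefl _ hNG
    set w0 := F.coeff 1 / G.coeff 1 with hw0def
    obtain ⟨t0, ht0, hev⟩ := hontoF w0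
    set H := F - C w0 * G with hHdef
    have hHcombo : H = C (1 - w0 * lam0) * F + C (-w0) * v := by
      rw [hHdef, hvdef]
      simp only [map_sub, map_mul, map_one, map_neg]
      ring
    have hH0 : H.coeff 0 = F.coeff 0 := by
      rw [hHdef, Polynomial.coeff_sub, Polynomial.coeff_C_mul, hG0, mul_zero, sub_zero]
    have hH0ne : H.coeff 0 ≠ 0 := by rw [hH0, hF0]; exact hfb
    have hHne : H ≠ 0 := fun h => hH0ne (by rw [h, Polynomial.coeff_zero])
    have hH1 : H.coeff 1 = 0 := by
      rw [hHdef, Polynomial.coeff_sub, Polynomial.coeff_C_mul, hw0def,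
        div_mul_cancel₀ _ hG1ne, sub_self]
    have hdH : H.natDegree ≤ d := by
      rw [hHdef]
      exact le_trans (Polynomial.natDegree_sub_le _ _)
        (max_le hdF (le_trans (Polynomial.natDegree_C_mul_le _ _) hdG))
    have hNH : 0 < Nm d r H := Nm_pos d hrpos hHne hdH
    have hHsz : ∀ i, 2 ≤ i → sz r H i < Nm d r H := by
      intro i hi
      have h := combo_sz d hrpos hFne hvne hdF hdv hob hIF hIv (1 - w0 * lam0) (-w0)
        (by rw [← hHcombo]; exact hHne) i hi
      rwa [← hHcombo] at h
    have hNmH0 : Nm d r H = ‖H.coeff 0‖ := by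
      obtain ⟨j, hjd, hj⟩ := Nm_exists d r H
      rcases Nat.lt_or_ge j 2 with hj2 | hj2
      · interval_cases j
        · rw [← hj, sz, pow_zero, mul_one]
        · exfalso
          rw [sz, hH1, norm_zero, zero_mul] at hj
          rw [← hj] at hNH
          exact lt_irrefl _ hNH
      · exfalso
        have h := hHsz j hj2
        rw [hj] at h
        exact lt_irrefl _ h
    have hcrit : ∀ i, 1 ≤ i → ‖H.coeff i‖ * r ^ i < ‖H.coeff 0‖ := by
      intro i hi
      have h0pos : 0 < ‖H.coeff 0‖ := norm_pos_iff.mpr hH0ne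
      rcases eq_or_ne i 1 with rfl | hne1
      · rw [hH1, norm_zero, zero_mul]
        exact h0pos
      · have hi2 : 2 ≤ i := by omega
        have h := hHsz i hi2
        rw [hNmH0] at h
        simpa [sz] using h
    have heval0 : H.eval t0 = 0 := by
      rw [hHdef]
      simp only [Polynomial.eval_sub, Polynomial.eval_mul, Polynomial.eval_C]
      rw [hev]
      ring
    exact eval_ne hrpos H hcrit ht0 heval0
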